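/- Let h, f, g : ℝ → ℝ be functions and let s, t be real numbers with 0 ≤ s ≤ t, h(s) ≠ 0 and h(t) ≠ 0. Let E₁^{[s,t]} be the evolution algebra whose structure matrix is (h(t)/2) times the matrix with constant rows (c₁,c₁,c₁), (c₂,c₂,c₂), (c₃,c₃,c₃), where c₁ = 1/h(s) + f(s), c₂ = 1/h(s) − g(s), c₃ = g(s) − f(s). If one of the conditions holds: (1) g(s) = f(s) = 1/h(s); (2) g(s) = f(s) = −1/h(s); (3) g(s) = −f(s) = 1/h(s); then E₁^{[s,t]} is isomorphic to the evolution algebra E₄ whose structure matrix has rows (1,0,0), (0,0,0), (0,0,0). -/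

import Mathlib

/-- Evolution algebra multiplication on ℝ³ determined by a structure matrix `A`:
`(x ∗_A y) j = ∑ i, x i * y i * A i j`. -/
def evolMul (A : Matrix (Fin 3) (Fin 3) ℝ) (x y : Fin 3 → ℝ) : Fin 3 → ℝ :=
  fun j => ∑ i, x i * y i * A i j

/-- The evolution algebras with structure matrices `A` and `B` are isomorphic:
there is an ℝ-linear equivalence of ℝ³ intertwining the two multiplications. -/
def EvolIso (A B : Matrix (Fin 3) (Fin 3) ℝ) : Prop :=
  ∃ f : (Fin 3 → ℝ) ≃ₗ[ℝ] (Fin 3 → ℝ),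
    ∀ x y, f (evolMul A x y) = evolMul B (f x) (f y)

noncomputable def eqv0 (k : ℝ) (hk : k ≠ 0) : (Fin 3 → ℝ) ≃ₗ[ℝ] (Fin 3 → ℝ) where
  toFun := fun x => ![k * x 0, x 1 - x 0, x 2 - x 0]
  invFun := fun y => ![y 0 / k, y 1 + y 0 / k, y 2 + y 0 / k]
  map_add' := by intro x y; funext j; fin_cases j <;> simp <;> first | rfl | ring
  map_smul' := by intro c x; funext j; fin_cases j <;> simp <;> first | rfl | ring
  left_inv := by intro x; funext j; fin_cases j <;> simp <;> field_simp <;> first | rfl | ring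
  right_inv := by intro y; funext j; fin_cases j <;> simp <;> field_simp <;> first | rfl | ring

noncomputable def eqv1 (k : ℝ) (hk : k ≠ 0) : (Fin 3 → ℝ) ≃ₗ[ℝ] (Fin 3 → ℝ) where
  toFun := fun x => ![k * x 1, x 0 - x 1, x 2 - x 1]
  invFun := fun y => ![y 1 + y 0 / k, y 0 / k, y 2 + y 0 / k]
  map_add' := by intro x y; funext j; fin_cases j <;> simp <;> first | rfl | ring
  map_smul' := by intro c x; funext j; fin_cases j <;> simp <;> first | rfl | ring
  left_inv := by intro x; funext j; fin_cases j <;> simp <;> field_simp <;> first | rfl | ring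
  right_inv := by intro y; funext j; fin_cases j <;> simp <;> field_simp <;> first | rfl | ring

noncomputable def eqv2 (k : ℝ) (hk : k ≠ 0) : (Fin 3 → ℝ) ≃ₗ[ℝ] (Fin 3 → ℝ) where
  toFun := fun x => ![k * x 2, x 0 - x 2, x 1 - x 2]
  invFun := fun y => ![y 1 + y 0 / k, y 2 + y 0 / k, y 0 / k]
  map_add' := by intro x y; funext j; fin_cases j <;> simp <;> first | rfl | ring
  map_smul' := by intro c x; funext j; fin_cases j <;> simp <;> first | rfl | ring
  left_inv := by intro x; funext j; fin_cases j <;> simp <;> field_simp <;> first | rfl | ring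
  right_inv := by intro y; funext j; fin_cases j <;> simp <;> field_simp <;> first | rfl | ring

lemma key0 (k : ℝ) (hk : k ≠ 0) :
    EvolIso !![k,k,k;0,0,0;0,0,0] !![1,0,0;0,0,0;0,0,0] := by
  refine ⟨eqv0 k hk, fun x y => ?_⟩
  funext j
  fin_cases j <;>
    simp [eqv0, evolMul, Fin.sum_univ_three, Matrix.vecHead, Matrix.vecTail] <;> ring

lemma key1 (k : ℝ) (hk : k ≠ 0) :
    EvolIso !![0,0,0;k,k,k;0,0,0] !![1,0,0;0,0,0;0,0,0] := by
  refine ⟨eqv1 k hk, fun x y => ?_⟩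
  funext j
  fin_cases j <;>
    simp [eqv1, evolMul, Fin.sum_univ_three, Matrix.vecHead, Matrix.vecTail] <;> ring

lemma key2 (k : ℝ) (hk : k ≠ 0) :
    EvolIso !![0,0,0;0,0,0;k,k,k] !![1,0,0;0,0,0;0,0,0] := by
  refine ⟨eqv2 k hk, fun x y => ?_⟩
  funext j
  fin_cases j <;>
    simp [eqv2, evolMul, Fin.sum_univ_three, Matrix.vecHead, Matrix.vecTail] <;> ring

theorem stmt (h f g : ℝ → ℝ) (s t : ℝ) (hst0 : 0 ≤ s) (hst : s ≤ t)
    (hhs : h s ≠ 0) (hht : h t ≠ 0)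
    (c₁ c₂ c₃ : ℝ) (hc₁ : c₁ = 1 / h s + f s) (hc₂ : c₂ = 1 / h s - g s)
    (hc₃ : c₃ = g s - f s)
    (hcond : (g s = f s ∧ f s = 1 / h s) ∨ (g s = f s ∧ f s = -(1 / h s)) ∨
             (g s = 1 / h s ∧ -(f s) = 1 / h s)) :
    EvolIso ((h t / 2) • (!![c₁, c₁, c₁; c₂, c₂, c₂; c₃, c₃, c₃] : Matrix (Fin 3) (Fin 3) ℝ)) (!![1, 0, 0; 0, 0, 0; 0, 0, 0] : Matrix (Fin 3) (Fin 3) ℝ) := by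
  have hk : h t / h s ≠ 0 := div_ne_zero hht hhs
  rcases hcond with ⟨h1, h2⟩ | ⟨h1, h2⟩ | ⟨h1, h2⟩
  · have hA : (h t / 2) • (!![c₁, c₁, c₁; c₂, c₂, c₂; c₃, c₃, c₃] : Matrix (Fin 3) (Fin 3) ℝ)
        = !![h t / h s, h t / h s, h t / h s; 0,0,0; 0,0,0] := by
      subst hc₁ hc₂ hc₃
      ext i j
      fin_cases i <;> fin_cases j <;>
        simp [h1, h2, Matrix.vecHead, Matrix.vecTail] <;> (try field_simp) <;> try ring
    rw [hA]; exact key0 _ hk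
  · have hA : (h t / 2) • (!![c₁, c₁, c₁; c₂, c₂, c₂; c₃, c₃, c₃] : Matrix (Fin 3) (Fin 3) ℝ)
        = !![0,0,0; h t / h s, h t / h s, h t / h s; 0,0,0] := by
      subst hc₁ hc₂ hc₃
      ext i j
      fin_cases i <;> fin_cases j <;>
        simp [h1, h2, Matrix.vecHead, Matrix.vecTail] <;> (try field_simp) <;> try ring
    rw [hA]; exact key1 _ hk
  · have hf : f s = -(1 / h s) := by linarith
    have hA : (h t / 2) • (!![c₁, c₁, c₁; c₂, c₂, c₂; c₃, c₃, c₃] : Matrix (Fin 3) (Fin 3) ℝ)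
        = !![0,0,0; 0,0,0; h t / h s, h t / h s, h t / h s] := by
      subst hc₁ hc₂ hc₃
      ext i j
      fin_cases i <;> fin_cases j <;>
        simp [h1, hf, Matrix.vecHead, Matrix.vecTail] <;> (try field_simp) <;> try ring
    rw [hA]; exact key2 _ hk
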